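/- If T is a quasi-balanced finite full binary tree (i.e., there exists a weight function under which all branches have equal total weight), then the weight function witnessing this is unique; explicitly, for a subtree with root edges e0,e1 leading to subtrees T0,T1, w(e0) = (1 + λ_{T1} − λ_{T0})/2 and w(e1) = (1 + λ_{T0} − λ_{T1})/2, where λ_S = E_S/2. -/

import Mathlib

/-- Finite full rooted ordered binary trees with internal nodes labeled by `X`. -/
inductive BTree (X : Type) : Type
  | leaf : BTree X
  | node : X → BTree X → BTree X → BTree X

namespace BTree

variable {X : Type}

/-- The branches (root-to-leaf paths) of a tree, each recorded as the list of
edge labels (`false` = left/0, `true` = right/1) along the path. -/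
def branches : BTree X → List (List Bool)
  | leaf => [[]]
  | node _ l r => (branches l).map (List.cons false) ++ (branches r).map (List.cons true)

/-- The expected length of a uniformly random branch:
`E T = ∑_{b ∈ B(T)} |b| · 2^{-|b|}`. -/
noncomputable def E (t : BTree X) : ℝ :=
  ((branches t).map (fun b => (b.length : ℝ) * (2 : ℝ) ^ (-(b.length : ℤ)))).sum

/-- The internal-node positions of the tree, as paths from the root. -/
def nodePaths : BTree X → List (List Bool)
  | leaf => []
  | node _ l r =>
      [] :: ((nodePaths l).map (List.cons false) ++ (nodePaths r).map (List.cons true))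

/-- `w` is a weight function for `t`: at every internal node, the two outgoing
edges get nonnegative weights summing to `1`. -/
def IsWeightFn (t : BTree X) (w : List Bool → Bool → ℝ) : Prop :=
  ∀ p ∈ nodePaths t, 0 ≤ w p false ∧ 0 ≤ w p true ∧ w p false + w p true = 1

/-- The total weight of a branch `b`: the sum of the weights of its edges. -/
def branchWeight (w : List Bool → Bool → ℝ) (b : List Bool) : ℝ :=
  ((List.range b.length).map (fun i => w (b.take i) (b.getD i false))).sum

/-- The subtree of `t` rooted at the end of the path `p` (junk value `leaf`
if the path leaves the tree). -/
def subtreeAt : BTree X → List Bool → BTree X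
  | t, [] => t
  | leaf, _ :: _ => leaf
  | node _ l r, d :: p => subtreeAt (if d then r else l) p

/-- A tree is quasi-balanced if some weight function gives all branches the
same total weight `E T / 2`. -/
def QuasiBalanced (t : BTree X) : Prop :=
  ∃ w : List Bool → Bool → ℝ, IsWeightFn t w ∧ ∀ b ∈ branches t, branchWeight w b = E t / 2

/-- A tree is monotone if every subtree's expected branch length is at least
that of each of its immediate subtrees. -/
def IsMonotone : BTree X → Prop
  | leaf => True
  | node x l r =>
      E l ≤ E (node x l r) ∧ E r ≤ E (node x l r) ∧ IsMonotone l ∧ IsMonotone r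

/-- The minimum length of a branch of the tree. -/
def minBranch : BTree X → ℕ
  | leaf => 0
  | node _ l r => 1 + min (minBranch l) (minBranch r)

/-- The sequence of labeled examples along the path `p`: at a node labeled `x`,
following the edge labeled `d` produces the example `(x, d)`. -/
def examplesAlong : BTree X → List Bool → List (X × Bool)
  | leaf, _ => []
  | node _ _ _, [] => []
  | node x l r, d :: p => (x, d) :: examplesAlong (if d then r else l) p

end BTree


namespace BTree

variable {X : Type}

private lemma two_zpow_negsucc (n : ℕ) :
    (2:ℝ) ^ (-((n:ℤ)+1)) = (2:ℝ) ^ (-(n:ℤ)) * 2⁻¹ := by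
  rw [show -((n:ℤ)+1) = -(n:ℤ) + (-1) by ring, zpow_add₀ (by norm_num : (2:ℝ) ≠ 0)]
  norm_num

private lemma bw_cons (w : List Bool → Bool → ℝ) (d : Bool) (b : List Bool) :
    branchWeight w (d :: b) = w [] d + branchWeight (fun q => w (d :: q)) b := by
  simp [branchWeight, List.range_succ_eq_map, List.map_map, Function.comp_def]

private lemma prob_shift (d : Bool) (L : List (List Bool)) :
    ((L.map (List.cons d)).map (fun b => (2:ℝ) ^ (-(b.length:ℤ)))).sum
      = ((L.map (fun b => (2:ℝ) ^ (-(b.length:ℤ)))).sum) * 2⁻¹ := by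
  induction L with
  | nil => simp
  | cons a L ih =>
      simp only [List.map_cons, List.sum_cons, ih, List.length_cons]
      push_cast
      rw [two_zpow_negsucc]
      ring

private lemma prob_sum (t : BTree X) :
    ((branches t).map (fun b => (2:ℝ) ^ (-(b.length:ℤ)))).sum = 1 := by
  induction t with
  | leaf => simp [branches]
  | node x l r ihl ihr =>
      simp only [branches, List.map_append, List.sum_append, prob_shift, ihl, ihr]
      norm_num

private lemma E_shift (d : Bool) (L : List (List Bool)) :
    ((L.map (List.cons d)).map (fun b => (b.length:ℝ) * (2:ℝ) ^ (-(b.length:ℤ)))).sum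
      = (((L.map (fun b => (b.length:ℝ) * (2:ℝ) ^ (-(b.length:ℤ)))).sum)
          + (L.map (fun b => (2:ℝ) ^ (-(b.length:ℤ)))).sum) * 2⁻¹ := by
  induction L with
  | nil => simp
  | cons a L ih =>
      simp only [List.map_cons, List.sum_cons, ih, List.length_cons]
      push_cast
      rw [two_zpow_negsucc]
      ring

private lemma E_node (x : X) (l r : BTree X) :
    E (node x l r) = 1 + E l / 2 + E r / 2 := by
  simp only [E, branches, List.map_append, List.sum_append, E_shift, prob_sum]
  ring

private lemma bw_shift (d : Bool) (w : List Bool → Bool → ℝ) (L : List (List Bool)) :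
    ((L.map (List.cons d)).map (fun b => (2:ℝ) ^ (-(b.length:ℤ)) * branchWeight w b)).sum
      = (w [] d * (L.map (fun b => (2:ℝ) ^ (-(b.length:ℤ)))).sum
          + (L.map (fun b => (2:ℝ) ^ (-(b.length:ℤ))
              * branchWeight (fun q => w (d :: q)) b)).sum) * 2⁻¹ := by
  induction L with
  | nil => simp
  | cons a L ih =>
      simp only [List.map_cons, List.sum_cons, ih, List.length_cons, bw_cons]
      push_cast
      rw [two_zpow_negsucc]
      ring

private lemma wf_left {x : X} {l r : BTree X} {w : List Bool → Bool → ℝ}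
    (hw : IsWeightFn (node x l r) w) : IsWeightFn l (fun q => w (false :: q)) := by
  intro p hp
  exact hw (false :: p) (by
    simp only [nodePaths, List.mem_cons, List.mem_append, List.mem_map]
    exact Or.inr (Or.inl ⟨p, hp, rfl⟩))

private lemma wf_right {x : X} {l r : BTree X} {w : List Bool → Bool → ℝ}
    (hw : IsWeightFn (node x l r) w) : IsWeightFn r (fun q => w (true :: q)) := by
  intro p hp
  exact hw (true :: p) (by
    simp only [nodePaths, List.mem_cons, List.mem_append, List.mem_map]
    exact Or.inr (Or.inr ⟨p, hp, rfl⟩))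

private lemma avg (t : BTree X) : ∀ (w : List Bool → Bool → ℝ), IsWeightFn t w →
    ((branches t).map (fun b => (2:ℝ) ^ (-(b.length:ℤ)) * branchWeight w b)).sum
      = E t / 2 := by
  induction t with
  | leaf => intro w _; simp [branches, branchWeight, E]
  | node x l r ihl ihr =>
      intro w hw
      have h1 := (hw [] (by simp [nodePaths])).2.2
      simp only [branches, List.map_append, List.sum_append, bw_shift,
        prob_sum, ihl _ (wf_left hw), ihr _ (wf_right hw), E_node]
      linarith

private lemma const_eq {t : BTree X} {w : List Bool → Bool → ℝ} (hw : IsWeightFn t w)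
    {c : ℝ} (h : ∀ b ∈ branches t, branchWeight w b = c) : c = E t / 2 := by
  have havg := avg t w hw
  have h2 : ((branches t).map (fun b => (2:ℝ) ^ (-(b.length:ℤ)) * branchWeight w b)).sum
      = ((branches t).map (fun b => (2:ℝ) ^ (-(b.length:ℤ)))).sum * c := by
    rw [← List.sum_map_mul_right]
    exact congrArg List.sum (List.map_congr_left (fun b hb => by rw [h b hb]))
  rw [h2, prob_sum, one_mul] at havg
  exact havg

private lemma root_weights {x : X} {l r : BTree X} {w : List Bool → Bool → ℝ}
    (hw : IsWeightFn (node x l r) w)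
    (hbal : ∀ b ∈ branches (node x l r), branchWeight w b = E (node x l r) / 2) :
    w [] false = E (node x l r) / 2 - E l / 2 ∧
    w [] true = E (node x l r) / 2 - E r / 2 := by
  constructor
  · have h := const_eq (wf_left hw) (c := E (node x l r) / 2 - w [] false) (fun b hb => by
      have h1 := hbal (false :: b) (List.mem_append_left _ (List.mem_map_of_mem hb))
      rw [bw_cons] at h1
      linarith)
    linarith
  · have h := const_eq (wf_right hw) (c := E (node x l r) / 2 - w [] true) (fun b hb => by
      have h1 := hbal (true :: b) (List.mem_append_right _ (List.mem_map_of_mem hb))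
      rw [bw_cons] at h1
      linarith)
    linarith

end BTree

/-- If `T` is quasi-balanced as witnessed by the weight function `w` (all
branches have weight `E T / 2`), then `w` is uniquely determined: at every
internal node with subtrees `T0, T1`, we have
`w(e0) = (1 + λ_{T1} - λ_{T0})/2` and `w(e1) = (1 + λ_{T0} - λ_{T1})/2`,
where `λ_S = E S / 2`. -/
theorem quasiBalanced_weight_unique {X : Type} (T : BTree X)
    (w : List Bool → Bool → ℝ) (hw : BTree.IsWeightFn T w)
    (hbal : ∀ b ∈ BTree.branches T, BTree.branchWeight w b = BTree.E T / 2) :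
    ∀ p ∈ BTree.nodePaths T, ∀ (x : X) (T0 T1 : BTree X),
      BTree.subtreeAt T p = BTree.node x T0 T1 →
        w p false = (1 + BTree.E T1 / 2 - BTree.E T0 / 2) / 2 ∧
        w p true = (1 + BTree.E T0 / 2 - BTree.E T1 / 2) / 2 := by
  revert hw hbal
  induction T generalizing w with
  | leaf => intro _ _ p hp; simp [BTree.nodePaths] at hp
  | node x l r ihl ihr =>
    intro hw hbal
    obtain ⟨hWf, hWt⟩ := BTree.root_weights hw hbal
    have hEn := BTree.E_node x l r
    have hb0 : ∀ b ∈ BTree.branches l,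
        BTree.branchWeight (fun q => w (false :: q)) b = BTree.E l / 2 := by
      intro b hb
      have h1 := hbal (false :: b) (List.mem_append_left _ (List.mem_map_of_mem hb))
      rw [BTree.bw_cons] at h1
      linarith
    have hb1 : ∀ b ∈ BTree.branches r,
        BTree.branchWeight (fun q => w (true :: q)) b = BTree.E r / 2 := by
      intro b hb
      have h1 := hbal (true :: b) (List.mem_append_right _ (List.mem_map_of_mem hb))
      rw [BTree.bw_cons] at h1
      linarith
    intro p hp x' T0 T1 hsub
    simp only [BTree.nodePaths, List.mem_cons, List.mem_append, List.mem_map] at hp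
    rcases hp with rfl | ⟨q, hq, rfl⟩ | ⟨q, hq, rfl⟩
    · simp only [BTree.subtreeAt, BTree.node.injEq] at hsub
      obtain ⟨-, rfl, rfl⟩ := hsub
      constructor <;> linarith
    · have hsub' : BTree.subtreeAt l q = BTree.node x' T0 T1 := by
        simpa [BTree.subtreeAt] using hsub
      exact ihl (fun q' => w (false :: q')) (BTree.wf_left hw) hb0 q hq x' T0 T1 hsub'
    · have hsub' : BTree.subtreeAt r q = BTree.node x' T0 T1 := by
        simpa [BTree.subtreeAt] using hsub
      exact ihr (fun q' => w (true :: q')) (BTree.wf_right hw) hb1 q hq x' T0 T1 hsub'
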